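/- Let E be a Polish space. There exists a jointly measurable map Φ : Δ(E) × [0,1] → E such that for every μ ∈ Δ(E), if U is uniformly distributed on [0,1], then Φ(μ, U) has law μ. -/

import Mathlib

open MeasureTheory Set Filter Topology

/-- Quantile-type function, set to a junk value `0` outside the good region. -/
noncomputable def bdQuant (μ : Measure ℝ) (u : ℝ) : ℝ :=
  if μ Set.univ = 1 ∧ u ∈ Set.Ioo (0 : ℝ) 1 then
    sInf {x | u ≤ (μ (Set.Iic x)).toReal} else 0

lemma quant_le_iff {μ : Measure ℝ} (hμ : μ Set.univ = 1) {u : ℝ}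
    (hu : u ∈ Set.Ioo (0 : ℝ) 1) (t : ℝ) :
    bdQuant μ u ≤ t ↔ u ≤ (μ (Set.Iic t)).toReal := by
  haveI : IsProbabilityMeasure μ := ⟨hμ⟩
  set F : ℝ → ℝ := fun x => (μ (Set.Iic x)).toReal with hF
  have hmono : Monotone F := fun a b hab =>
    ENNReal.toReal_mono (measure_ne_top μ _) (measure_mono (Iic_subset_Iic.2 hab))
  set S : Set ℝ := {x | u ≤ F x} with hS
  -- S is nonempty
  have hne : S.Nonempty := by
    have h1 : Tendsto (fun n : ℕ => μ (Set.Iic (n : ℝ))) atTop (𝓝 (μ (⋃ n : ℕ, Set.Iic (n : ℝ)))) :=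
      tendsto_measure_iUnion_atTop fun a b hab => Iic_subset_Iic.2 (Nat.cast_le.2 hab)
    have hU : (⋃ n : ℕ, Set.Iic (n : ℝ)) = univ := by
      apply eq_univ_of_forall fun x => ?_
      obtain ⟨n, hn⟩ := exists_nat_ge x
      exact mem_iUnion.2 ⟨n, hn⟩
    rw [hU, hμ] at h1
    have h2 : Tendsto (fun n : ℕ => F (n : ℝ)) atTop (𝓝 1) := by
      have := (ENNReal.tendsto_toReal ENNReal.one_ne_top).comp h1
      simpa [hF, Function.comp_def] using this
    obtain ⟨n, hn⟩ := (h2.eventually (eventually_gt_nhds hu.2)).exists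
    exact ⟨(n : ℝ), le_of_lt hn⟩
  -- S is bounded below
  have hbdd : BddBelow S := by
    have h1 : Tendsto (fun n : ℕ => μ (Set.Iic (-(n : ℝ)))) atTop
        (𝓝 (μ (⋂ n : ℕ, Set.Iic (-(n : ℝ))))) := by
      refine tendsto_measure_iInter_atTop (fun _ => measurableSet_Iic.nullMeasurableSet)
        (fun a b hab => Iic_subset_Iic.2 (neg_le_neg (Nat.cast_le.2 hab)))
        ⟨0, measure_ne_top μ _⟩
    have hI : (⋂ n : ℕ, Set.Iic (-(n : ℝ))) = ∅ := by
      apply eq_empty_iff_forall_notMem.2 fun x hx => ?_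
      obtain ⟨n, hn⟩ := exists_nat_gt (-x)
      have := mem_iInter.1 hx n
      simp only [mem_Iic] at this
      linarith
    rw [hI, measure_empty] at h1
    have h2 : Tendsto (fun n : ℕ => F (-(n : ℝ))) atTop (𝓝 0) := by
      have := (ENNReal.tendsto_toReal ENNReal.zero_ne_top).comp h1
      simpa [hF, Function.comp_def] using this
    obtain ⟨n, hn⟩ := (h2.eventually (eventually_lt_nhds hu.1)).exists
    refine ⟨-(n : ℝ), fun y hy => ?_⟩
    by_contra hc
    push_neg at hc
    exact absurd (le_trans hy (hmono hc.le)) (not_le.2 hn)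
  -- right continuity of F at t
  have hrc : Tendsto (fun n : ℕ => F (t + 1 / (n + 1))) atTop (𝓝 (F t)) := by
    have h1 : Tendsto (fun n : ℕ => μ (Set.Iic (t + 1 / ((n : ℝ) + 1)))) atTop
        (𝓝 (μ (⋂ n : ℕ, Set.Iic (t + 1 / ((n : ℝ) + 1))))) := by
      refine tendsto_measure_iInter_atTop (fun _ => measurableSet_Iic.nullMeasurableSet)
        (fun a b hab => Iic_subset_Iic.2 ?_) ⟨0, measure_ne_top μ _⟩
      have : 1 / ((b : ℝ) + 1) ≤ 1 / ((a : ℝ) + 1) := by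
        apply one_div_le_one_div_of_le (by positivity)
        exact_mod_cast add_le_add_left (Nat.cast_le.2 hab) 1
      linarith
    have hI : (⋂ n : ℕ, Set.Iic (t + 1 / ((n : ℝ) + 1))) = Set.Iic t := by
      ext x
      simp only [mem_iInter, mem_Iic]
      constructor
      · intro h
        refine le_of_forall_pos_le_add fun ε hε => ?_
        obtain ⟨n, hn⟩ := exists_nat_one_div_lt hε
        exact le_trans (h n) (by linarith)
      · intro h n
        have : (0 : ℝ) < 1 / ((n : ℝ) + 1) := by positivity
        linarith
    rw [hI] at h1
    exact (ENNReal.tendsto_toReal (measure_ne_top μ _)).comp h1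
  have hquant : bdQuant μ u = sInf S := if_pos ⟨hμ, hu⟩
  rw [hquant]
  constructor
  · intro h
    refine ge_of_tendsto' hrc fun n => ?_
    have hlt : sInf S < t + 1 / ((n : ℝ) + 1) := lt_of_le_of_lt h ((lt_add_iff_pos_right t).2 (by positivity))
    obtain ⟨s, hsS, hst⟩ := (csInf_lt_iff hbdd hne).1 hlt
    exact le_trans hsS (hmono hst.le)
  · intro h
    exact csInf_le hbdd h

lemma measurable_bdQuant : Measurable (fun p : Measure ℝ × ℝ => bdQuant p.1 p.2) := by
  apply measurable_of_Iic
  intro t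
  have h1 : MeasurableSet {p : Measure ℝ × ℝ | p.1 Set.univ = 1} :=
    ((Measure.measurable_coe MeasurableSet.univ).comp measurable_fst)
      (measurableSet_singleton 1)
  have h2 : MeasurableSet {p : Measure ℝ × ℝ | p.2 ∈ Set.Ioo (0 : ℝ) 1} :=
    measurable_snd measurableSet_Ioo
  have hG : MeasurableSet {p : Measure ℝ × ℝ | p.1 Set.univ = 1 ∧ p.2 ∈ Set.Ioo (0 : ℝ) 1} :=
    h1.inter h2
  have hH : MeasurableSet {p : Measure ℝ × ℝ | p.2 ≤ (p.1 (Set.Iic t)).toReal} :=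
    measurableSet_le measurable_snd
      (((Measure.measurable_coe measurableSet_Iic).comp measurable_fst).ennreal_toReal)
  have hkey : (fun p : Measure ℝ × ℝ => bdQuant p.1 p.2) ⁻¹' Set.Iic t =
      ({p : Measure ℝ × ℝ | p.1 Set.univ = 1 ∧ p.2 ∈ Set.Ioo (0 : ℝ) 1} ∩
        {p : Measure ℝ × ℝ | p.2 ≤ (p.1 (Set.Iic t)).toReal}) ∪
      ({p : Measure ℝ × ℝ | p.1 Set.univ = 1 ∧ p.2 ∈ Set.Ioo (0 : ℝ) 1}ᶜ ∩
        {p : Measure ℝ × ℝ | (0 : ℝ) ≤ t}) := by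
    ext p
    by_cases hp : p.1 Set.univ = 1 ∧ p.2 ∈ Set.Ioo (0 : ℝ) 1
    · simp only [mem_preimage, mem_Iic, mem_union, mem_inter_iff, mem_setOf_eq, mem_compl_iff,
        hp, not_true_eq_false, false_and, or_false, true_and]
      exact quant_le_iff hp.1 hp.2 t
    · simp only [mem_preimage, mem_Iic, mem_union, mem_inter_iff, mem_setOf_eq, mem_compl_iff,
        hp, not_false_eq_true, false_and, false_or, true_and]
      rw [bdQuant, if_neg hp]
  rw [hkey]
  refine (hG.inter hH).union (hG.compl.inter ?_)
  by_cases h : (0 : ℝ) ≤ t <;> simp [h]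

lemma map_bdQuant (μ : Measure ℝ) (hμ : IsProbabilityMeasure μ) :
    Measure.map (fun u => bdQuant μ u) (volume.restrict (Set.Icc (0 : ℝ) 1)) = μ := by
  have hmeas : Measurable fun u => bdQuant μ u :=
    measurable_bdQuant.comp (measurable_const.prodMk measurable_id)
  haveI : IsProbabilityMeasure (volume.restrict (Set.Icc (0 : ℝ) 1)) := by
    constructor
    rw [Measure.restrict_apply_univ]
    simp
  haveI : IsProbabilityMeasure
      (Measure.map (fun u => bdQuant μ u) (volume.restrict (Set.Icc (0 : ℝ) 1))) :=
    Measure.isProbabilityMeasure_map hmeas.aemeasurable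
  refine Measure.ext_of_Iic _ _ fun t => ?_
  rw [Measure.map_apply hmeas measurableSet_Iic,
    ← Measure.restrict_congr_set (Ioo_ae_eq_Icc (μ := volume) (a := (0:ℝ)) (b := 1)),
    Measure.restrict_apply (hmeas measurableSet_Iic)]
  set c := (μ (Set.Iic t)).toReal with hc
  have hc0 : 0 ≤ c := ENNReal.toReal_nonneg
  have hc1 : c ≤ 1 := by
    rw [hc]
    exact ENNReal.toReal_le_of_le_ofReal zero_le_one (by simpa using prob_le_one)
  have hset : (fun u => bdQuant μ u) ⁻¹' Set.Iic t ∩ Set.Ioo 0 1 =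
      Set.Ioc 0 c ∩ Set.Ioo 0 1 := by
    ext u
    simp only [mem_inter_iff, mem_preimage, mem_Iic, mem_Ioo, mem_Ioc]
    constructor
    · rintro ⟨hle, hu⟩
      exact ⟨⟨hu.1, (quant_le_iff hμ.measure_univ hu t).1 hle⟩, hu⟩
    · rintro ⟨⟨_, hle⟩, hu⟩
      exact ⟨(quant_le_iff hμ.measure_univ hu t).2 hle, hu⟩
  rw [hset]
  have hvol : volume (Set.Ioc 0 c ∩ Set.Ioo (0:ℝ) 1) = ENNReal.ofReal c := by
    rcases lt_or_eq_of_le hc1 with h | h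
    · have : Set.Ioc (0:ℝ) c ∩ Set.Ioo 0 1 = Set.Ioc 0 c := by
        refine inter_eq_left.2 fun x hx => ?_
        exact ⟨hx.1, lt_of_le_of_lt hx.2 h⟩
      rw [this, Real.volume_Ioc, sub_zero]
    · have : Set.Ioc (0:ℝ) c ∩ Set.Ioo 0 1 = Set.Ioo 0 1 := by
        refine inter_eq_right.2 fun x hx => ?_
        exact ⟨hx.1, h ▸ hx.2.le⟩
      rw [this, Real.volume_Ioo, sub_zero, ← h]
  rw [hvol, hc, ENNReal.ofReal_toReal (measure_ne_top μ _)]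

/-- Blackwell–Dubins: for a Polish space `E` there is a jointly measurable
map `Φ : Δ(E) × [0,1] → E` such that for every probability measure `μ`, the image of the
uniform law on `[0,1]` under `Φ(μ, ·)` is `μ`. -/
theorem stmt_7 {E : Type*} [MeasurableSpace E] [StandardBorelSpace E] [Nonempty E] :
    ∃ Φ : Measure E × ℝ → E, Measurable Φ ∧
      ∀ μ : Measure E, IsProbabilityMeasure μ →
        Measure.map (fun u => Φ (μ, u)) (volume.restrict (Set.Icc (0 : ℝ) 1)) = μ := by
  obtain ⟨f, hf⟩ := MeasureTheory.exists_measurableEmbedding_real E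
  obtain ⟨g, hg, hgf⟩ := hf.exists_measurable_extend measurable_id fun _ => ‹Nonempty E›
  refine ⟨fun p => g (bdQuant (Measure.map f p.1) p.2), ?_, ?_⟩
  · exact hg.comp (measurable_bdQuant.comp
      (((Measure.measurable_map f hf.measurable).comp measurable_fst).prodMk measurable_snd))
  · intro μ hμ
    haveI : IsProbabilityMeasure (Measure.map f μ) :=
      Measure.isProbabilityMeasure_map hf.measurable.aemeasurable
    have hq : Measurable fun u => bdQuant (Measure.map f μ) u :=
      measurable_bdQuant.comp (measurable_const.prodMk measurable_id)
    calc Measure.map (fun u => g (bdQuant (Measure.map f μ) u))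
          (volume.restrict (Set.Icc (0 : ℝ) 1))
        = Measure.map g (Measure.map (fun u => bdQuant (Measure.map f μ) u)
            (volume.restrict (Set.Icc (0 : ℝ) 1))) := (Measure.map_map hg hq).symm
      _ = Measure.map g (Measure.map f μ) := by rw [map_bdQuant _ this]
      _ = Measure.map (g ∘ f) μ := Measure.map_map hg hf.measurable
      _ = μ := by rw [hgf]; exact Measure.map_id
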